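/- Let p be an odd prime, n ≥ 1, and let G = (ℤ/p^n)^× act on ℤ/p^n by r · α = r^k·α where k = m(p−1) for a nonzero integer m. Then the subgroup of G-fixed points is cyclic of order p^i, where p^i = gcd(|m|·p, p^n); explicitly it is the subgroup p^{n−i}·(ℤ/p^n) ≅ ℤ/p^i. -/

import Mathlib

private lemma aux_dvd (p : ℕ) (hp : p.Prime) (hodd : Odd p) (M : ℕ) (hM : M ≠ 0)
    (a : ℤ) (ha : ¬ (p : ℤ) ∣ a) :
    (p : ℤ) ^ (1 + padicValNat p M) ∣ a ^ (M * (p - 1)) - 1 := by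
  haveI : Fact p.Prime := ⟨hp⟩
  set s : ℤ := a ^ (p - 1) with hs
  have h097 : a ^ (M * (p - 1)) = s ^ M := by
    rw [hs, ← pow_mul, mul_comm]
  have hdvd : (p : ℤ) ∣ s - 1 := by
    have ha' : (a : ZMod p) ≠ 0 := by
      simpa [Ne, ZMod.intCast_zmod_eq_zero_iff_dvd] using ha
    have : ((s - 1 : ℤ) : ZMod p) = 0 := by
      push_cast [hs]
      rw [ZMod.pow_card_sub_one_eq_one ha']
      ring
    exact (ZMod.intCast_zmod_eq_zero_iff_dvd _ _).mp this
  have hns : ¬ (p : ℤ) ∣ s := by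
    intro h
    exact ha ((Nat.prime_iff_prime_int.mp hp).dvd_of_dvd_pow h)
  rw [h097]
  by_cases h0 : s ^ M - 1 = 0
  · rw [h0]; exact dvd_zero _
  have hlte := Int.emultiplicity_pow_sub_pow hp hodd (by simpa using hdvd) hns M
  simp only [one_pow] at hlte
  apply pow_dvd_of_le_emultiplicity
  rw [hlte]
  have h1 : (1 : ℕ∞) ≤ emultiplicity (p : ℤ) (s - 1) :=
    le_emultiplicity_of_pow_dvd (by simpa using hdvd)
  have h2 : (padicValNat p M : ℕ∞) = emultiplicity p M :=
    padicValNat_eq_emultiplicity hM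
  rw [Nat.cast_add, Nat.cast_one]
  exact add_le_add h1 h2.le

private lemma aux_exact (p : ℕ) (hp : p.Prime) (hodd : Odd p) (M : ℕ) (hM : M ≠ 0) :
    ∃ t : ℤ, ((1 + p : ℕ) : ℤ) ^ (M * (p - 1)) - 1 = (p : ℤ) ^ (1 + padicValNat p M) * t ∧
      ¬ (p : ℤ) ∣ t := by
  haveI : Fact p.Prime := ⟨hp⟩
  set x : ℤ := ((1 + p : ℕ) : ℤ) with hx
  have hx1 : x - 1 = (p : ℤ) := by push_cast [hx]; ring
  have hxy : (p : ℤ) ∣ x - 1 := hx1 ▸ dvd_refl _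
  have hpx : ¬ (p : ℤ) ∣ x := by
    intro h
    have h1 : (p : ℤ) ∣ 1 := by
      have := dvd_sub h hxy
      simpa using this
    have h2 := Int.le_of_dvd one_pos h1
    have h3 := hp.two_le
    omega
  have hlte := Int.emultiplicity_pow_sub_pow hp hodd hxy hpx (M * (p - 1))
  simp only [one_pow] at hlte
  have hmp : emultiplicity (p : ℤ) (x - 1) = 1 := by
    rw [hx1]
    exact_mod_cast (Int.natCast_emultiplicity p p).symm ▸
      (Nat.Prime.emultiplicity_self hp)
  have hmm : emultiplicity p (M * (p - 1)) = (padicValNat p M : ℕ∞) := by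
    rw [Nat.Prime.emultiplicity_mul hp]
    have h1 : emultiplicity p (p - 1) = 0 := by
      rw [emultiplicity_eq_zero]
      intro h
      have h2 := hp.two_le
      have h3 := Nat.le_of_dvd (by omega) h
      omega
    rw [h1, add_zero, ← padicValNat_eq_emultiplicity hM]
  have htot : emultiplicity (p : ℤ) (x ^ (M * (p - 1)) - 1) =
      ((1 + padicValNat p M : ℕ) : ℕ∞) := by
    rw [hlte, hmp, hmm]
    push_cast
    ring
  obtain ⟨hdvd, hnd⟩ := emultiplicity_eq_coe.mp htot
  obtain ⟨t, ht⟩ := hdvd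
  refine ⟨t, ht, fun hdt => hnd ?_⟩
  obtain ⟨u, hu⟩ := hdt
  exact ⟨u, by rw [ht, hu, pow_succ]; ring⟩

theorem stmt3 (p n : ℕ) (hp : p.Prime) (hodd : Odd p) (hn : 1 ≤ n)
    (m : ℤ) (hm : m ≠ 0) :
    (∀ α : ZMod (p ^ n),
      (∀ r : (ZMod (p ^ n))ˣ,
          ((r ^ (m * ((p : ℤ) - 1)) : (ZMod (p ^ n))ˣ) : ZMod (p ^ n)) * α = α) ↔
        ∃ β : ZMod (p ^ n),
          α = (p : ZMod (p ^ n)) ^ (n - min (1 + padicValInt p m) n) * β) ∧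
    Nat.card {α : ZMod (p ^ n) //
        ∀ r : (ZMod (p ^ n))ˣ,
          ((r ^ (m * ((p : ℤ) - 1)) : (ZMod (p ^ n))ˣ) : ZMod (p ^ n)) * α = α} =
      p ^ min (1 + padicValInt p m) n := by
  haveI : Fact p.Prime := ⟨hp⟩
  haveI : NeZero (p ^ n) := ⟨pow_ne_zero n hp.pos.ne'⟩
  have hp1 : 1 ≤ p := hp.one_le
  set M : ℕ := m.natAbs with hMdef
  have hM : M ≠ 0 := Int.natAbs_ne_zero.mpr hm
  set N : ℕ := M * (p - 1) with hNdef
  set v : ℕ := padicValNat p M with hvdef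
  have hvv : padicValInt p m = v := rfl
  set i : ℕ := min (1 + v) n with hidef
  have hi_le : i ≤ n := min_le_right _ _
  have hcastp : ((p - 1 : ℕ) : ℤ) = (p : ℤ) - 1 := by
    push_cast [hp1]; ring
  have hNcast : ((N : ℕ) : ℤ) = (M : ℤ) * ((p : ℤ) - 1) := by
    rw [hNdef]; push_cast [hp1]; ring
  have hk : m * ((p : ℤ) - 1) = (N : ℤ) ∨ m * ((p : ℤ) - 1) = -(N : ℤ) := by
    rcases Int.natAbs_eq m with h | h
    · left; rw [hNcast, h]
    · right; rw [hNcast, h]; ring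
  -- reduction from zpow to natural pow
  have key : ∀ (α : ZMod (p ^ n)),
      (∀ r : (ZMod (p ^ n))ˣ,
        ((r ^ (m * ((p : ℤ) - 1)) : (ZMod (p ^ n))ˣ) : ZMod (p ^ n)) * α = α) ↔
      (∀ r : (ZMod (p ^ n))ˣ,
        ((r ^ N : (ZMod (p ^ n))ˣ) : ZMod (p ^ n)) * α = α) := by
    intro α
    rcases hk with h | h
    · simp only [h, zpow_natCast]
    · constructor
      · intro H r
        have := H r⁻¹
        rwa [h, zpow_neg, inv_zpow, inv_inv, zpow_natCast] at this
      · intro H r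
        rw [h, zpow_neg, zpow_natCast, ← inv_pow]
        exact H r⁻¹
  -- the key fixed-point characterization
  have hiff : ∀ α : ZMod (p ^ n),
      (∀ r : (ZMod (p ^ n))ˣ,
        ((r ^ (m * ((p : ℤ) - 1)) : (ZMod (p ^ n))ˣ) : ZMod (p ^ n)) * α = α) ↔
      ∃ β : ZMod (p ^ n), α = (p : ZMod (p ^ n)) ^ (n - i) * β := by
    intro α
    rw [key α]
    constructor
    · intro HN
      -- use the unit 1 + p
      have hcop : Nat.Coprime (1 + p) (p ^ n) :=
        Nat.Coprime.pow_right _ (Nat.coprime_add_self_left.mpr (Nat.coprime_one_left p))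
      set u : (ZMod (p ^ n))ˣ := ZMod.unitOfCoprime _ hcop with hu
      have hucoe : (u : ZMod (p ^ n)) = ((1 + p : ℕ) : ZMod (p ^ n)) :=
        ZMod.coe_unitOfCoprime _ hcop
      have h1 : ((1 + p : ℕ) : ZMod (p ^ n)) ^ N * α = α := by
        have := HN u
        rwa [Units.val_pow_eq_pow_val, hucoe] at this
      obtain ⟨t, ht, hpt⟩ := aux_exact p hp hodd M hM
      have hz : ((1 + p : ℕ) : ZMod (p ^ n)) ^ N - 1 =
          (p : ZMod (p ^ n)) ^ (1 + v) * (t : ZMod (p ^ n)) := by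
        have := congrArg (fun z : ℤ => (z : ZMod (p ^ n))) ht
        push_cast at this
        exact_mod_cast this
      have h2 : (p : ZMod (p ^ n)) ^ (1 + v) * (t : ZMod (p ^ n)) * α = 0 := by
        rw [← hz]
        calc (((1 + p : ℕ) : ZMod (p ^ n)) ^ N - 1) * α
            = ((1 + p : ℕ) : ZMod (p ^ n)) ^ N * α - α := by ring
          _ = 0 := by rw [h1, sub_self]
      -- t is a unit
      have hunit : IsUnit (t : ZMod (p ^ n)) := by
        have hnd : ¬ p ∣ t.natAbs := by
          intro h
          exact hpt (Int.natCast_dvd.mpr h)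
        have hcopt : Nat.Coprime t.natAbs (p ^ n) :=
          Nat.Coprime.pow_right _ ((Nat.Prime.coprime_iff_not_dvd hp).mpr hnd).symm
        have habs : IsUnit ((t.natAbs : ℕ) : ZMod (p ^ n)) :=
          (ZMod.isUnit_iff_coprime _ _).mpr hcopt
        rcases Int.natAbs_eq t with h | h
        · rw [h, Int.cast_natCast]; exact habs
        · rw [h, Int.cast_neg, Int.cast_natCast]; exact habs.neg
      obtain ⟨t', ht'⟩ := isUnit_iff_exists_inv.mp hunit
      have h3 : (p : ZMod (p ^ n)) ^ (1 + v) * α = 0 := by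
        calc (p : ZMod (p ^ n)) ^ (1 + v) * α
            = (p : ZMod (p ^ n)) ^ (1 + v) * α * ((t : ZMod (p ^ n)) * t') := by
              rw [ht', mul_one]
          _ = ((p : ZMod (p ^ n)) ^ (1 + v) * (t : ZMod (p ^ n)) * α) * t' := by ring
          _ = 0 := by rw [h2, zero_mul]
      have h4 : (p : ZMod (p ^ n)) ^ i * α = 0 := by
        rcases le_or_gt (1 + v) n with hle | hlt
        · rw [hidef, min_eq_left hle]; exact h3
        · rw [hidef, min_eq_right hlt.le, ← Nat.cast_pow, ZMod.natCast_self, zero_mul]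
      -- extract β
      have h5 : (p ^ n : ℕ) ∣ p ^ i * α.val := by
        rw [← ZMod.natCast_eq_zero_iff]
        push_cast
        rw [ZMod.natCast_val, ZMod.cast_id]
        exact h4
      obtain ⟨B, hB⟩ : p ^ (n - i) ∣ α.val := by
        have h6 : p ^ i * p ^ (n - i) ∣ p ^ i * α.val := by
          rw [← pow_add, Nat.add_sub_cancel' hi_le]; exact h5
        exact (mul_dvd_mul_iff_left (pow_ne_zero i hp.pos.ne')).mp h6
      refine ⟨(B : ZMod (p ^ n)), ?_⟩
      calc α = ((α.val : ℕ) : ZMod (p ^ n)) := by rw [ZMod.natCast_val, ZMod.cast_id]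
        _ = ((p ^ (n - i) * B : ℕ) : ZMod (p ^ n)) := by rw [hB]
        _ = (p : ZMod (p ^ n)) ^ (n - i) * (B : ZMod (p ^ n)) := by push_cast; ring
    · rintro ⟨β, rfl⟩ r
      have hcopr := ZMod.val_coe_unit_coprime r
      set a : ℤ := (((r : ZMod (p ^ n)).val : ℕ) : ℤ) with ha
      have hpa : ¬ (p : ℤ) ∣ a := by
        rw [ha, Int.natCast_dvd_natCast]
        intro hdvd
        have h1 : p ∣ Nat.gcd ((r : ZMod (p ^ n)).val) (p ^ n) :=
          Nat.dvd_gcd hdvd (dvd_pow_self p (by omega))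
        rw [hcopr] at h1
        have h2 := hp.two_le
        have h3 := Nat.le_of_dvd one_pos h1
        omega
      have hdvd := aux_dvd p hp hodd M hM a hpa
      have hdvd2 : (p : ℤ) ^ i ∣ a ^ N - 1 :=
        dvd_trans (pow_dvd_pow _ (min_le_left _ _)) hdvd
      obtain ⟨d, hd⟩ := hdvd2
      have hra : ((a : ℤ) : ZMod (p ^ n)) = (r : ZMod (p ^ n)) := by
        rw [ha]
        push_cast
        rw [ZMod.natCast_val, ZMod.cast_id]
      have hz : ((r : ZMod (p ^ n))) ^ N - 1 = (p : ZMod (p ^ n)) ^ i * (d : ZMod (p ^ n)) := by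
        have := congrArg (fun z : ℤ => (z : ZMod (p ^ n))) hd
        push_cast at this
        rw [hra] at this
        exact_mod_cast this
      have hsub : ((r ^ N : (ZMod (p ^ n))ˣ) : ZMod (p ^ n)) *
          ((p : ZMod (p ^ n)) ^ (n - i) * β) - (p : ZMod (p ^ n)) ^ (n - i) * β = 0 := by
        rw [Units.val_pow_eq_pow_val]
        calc (r : ZMod (p ^ n)) ^ N * ((p : ZMod (p ^ n)) ^ (n - i) * β) -
              (p : ZMod (p ^ n)) ^ (n - i) * β
            = ((r : ZMod (p ^ n)) ^ N - 1) * (p : ZMod (p ^ n)) ^ (n - i) * β := by ring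
          _ = ((p : ZMod (p ^ n)) ^ i * (p : ZMod (p ^ n)) ^ (n - i)) *
              ((d : ZMod (p ^ n)) * β) := by rw [hz]; ring
          _ = 0 := by
              rw [← pow_add, Nat.add_sub_cancel' hi_le, ← Nat.cast_pow, ZMod.natCast_self,
                zero_mul]
      exact sub_eq_zero.mp hsub
  refine ⟨hiff, ?_⟩
  -- counting
  set c : ZMod (p ^ n) := (p : ZMod (p ^ n)) ^ (n - i) with hc
  have hmem : ∀ α : ZMod (p ^ n), (∃ β : ZMod (p ^ n), α = c * β) ↔
      α ∈ AddSubgroup.zmultiples c := by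
    intro α
    rw [AddSubgroup.mem_zmultiples_iff]
    constructor
    · rintro ⟨β, rfl⟩
      refine ⟨((β.val : ℕ) : ℤ), ?_⟩
      rw [zsmul_eq_mul]
      push_cast
      rw [ZMod.natCast_val, ZMod.cast_id, mul_comm]
    · rintro ⟨k, rfl⟩
      exact ⟨(k : ZMod (p ^ n)), by rw [zsmul_eq_mul, mul_comm]⟩
  have hequiv : {α : ZMod (p ^ n) //
      ∀ r : (ZMod (p ^ n))ˣ,
        ((r ^ (m * ((p : ℤ) - 1)) : (ZMod (p ^ n))ˣ) : ZMod (p ^ n)) * α = α} ≃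
      AddSubgroup.zmultiples c :=
    Equiv.subtypeEquivRight (fun α => (hiff α).trans (hmem α))
  rw [Nat.card_congr hequiv, Nat.card_zmultiples]
  have hcc : c = ((p ^ (n - i) : ℕ) : ZMod (p ^ n)) := by rw [hc]; push_cast; ring
  rw [hcc, ZMod.addOrderOf_coe _ (pow_ne_zero n hp.pos.ne')]
  rw [Nat.gcd_eq_right (pow_dvd_pow p (Nat.sub_le n i))]
  rw [Nat.pow_div (Nat.sub_le n i) hp.pos]
  congr 1
  omega
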